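/- For every k ≥ 1 and every positive integer a, there exists an M-sequence (1, g_1, ..., g_k) with g_k = a and g_1 + g_2 + ... + g_{k-1} ≤ C_k · a^{(k-1)/k} for a constant C_k depending only on k. -/

import Mathlib

/-- The largest `a` such that `C(a,i) ≤ n` (for `n ≥ 1`, `i ≥ 1`):
the top term of the `i`-th Macaulay representation of `n`. -/
def macaulayTop (n i : ℕ) : ℕ :=
  Nat.findGreatest (fun a => Nat.choose a i ≤ n) (n + i)

/-- The Macaulay pseudo-power `n^{<i>}`: write the `i`-th Macaulay representation
`n = C(a_i,i) + C(a_{i-1},i-1) + ⋯ + C(a_j,j)` (computed greedily) and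
return `C(a_i+1,i+1) + C(a_{i-1}+1,i) + ⋯ + C(a_j+1,j+1)`; also `0^{<i>} = 0`. -/
def pseudoPow : ℕ → ℕ → ℕ
  | _, 0 => 0
  | n, (i+1) =>
    if n = 0 then 0
    else Nat.choose (macaulayTop n (i+1) + 1) (i+2) +
      pseudoPow (n - Nat.choose (macaulayTop n (i+1)) (i+1)) i

/-- `(g 0, g 1, …, g k)` is an M-sequence: `g 0 = 1` and
`g (i+1) ≤ (g i)^{<i>}` for all `1 ≤ i < k`. -/
def IsMSequence (g : ℕ → ℕ) (k : ℕ) : Prop :=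
  g 0 = 1 ∧ ∀ i, 1 ≤ i → i < k → g (i + 1) ≤ pseudoPow (g i) i

lemma pseudoPow_zero_left (i : ℕ) : pseudoPow 0 i = 0 := by
  cases i <;> simp [pseudoPow]

/-- `x ≤ C(x,i) + i` for `i ≥ 1`. -/
lemma le_choose_add (x : ℕ) : ∀ i, 1 ≤ i → x ≤ Nat.choose x i + i := by
  induction x with
  | zero => intro i _; omega
  | succ x ih =>
    intro i hi
    obtain ⟨j, rfl⟩ : ∃ j, i = j + 1 := ⟨i - 1, by omega⟩
    rcases le_or_gt (x + 1) (j + 1) with h | h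
    · omega
    · rw [Nat.choose_succ_succ']
      have h1 : 1 ≤ Nat.choose x j := Nat.choose_pos (by omega)
      have h2 := ih (j + 1) (by omega)
      omega

lemma macaulayTop_choose {x i : ℕ} (hi : 1 ≤ i) (hx : i ≤ x) :
    macaulayTop (Nat.choose x i) i = x := by
  rw [macaulayTop, Nat.findGreatest_eq_iff]
  refine ⟨by have := le_choose_add x i hi; omega, fun _ => le_rfl, fun n hn _ hP => ?_⟩
  have h1 : Nat.choose x i < Nat.choose (x + 1) i := by
    obtain ⟨j, rfl⟩ : ∃ j, i = j + 1 := ⟨i - 1, by omega⟩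
    rw [Nat.choose_succ_succ']
    have : 1 ≤ Nat.choose x j := Nat.choose_pos (by omega)
    omega
  have h2 : Nat.choose (x + 1) i ≤ Nat.choose n i := Nat.choose_le_choose i (by omega)
  omega

lemma pseudoPow_choose {x i : ℕ} (hi : 1 ≤ i) (hx : i ≤ x) :
    pseudoPow (Nat.choose x i) i = Nat.choose (x + 1) (i + 1) := by
  obtain ⟨j, rfl⟩ : ∃ j, i = j + 1 := ⟨i - 1, by omega⟩
  have hne : Nat.choose x (j + 1) ≠ 0 := (Nat.choose_pos hx).ne'
  rw [pseudoPow, if_neg hne, macaulayTop_choose hi hx, Nat.sub_self, pseudoPow_zero_left,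
    add_zero]

/-- for every `k ≥ 1` there is a constant `C` depending only on `k`
such that for every positive integer `a` there exists an M-sequence
`(1, g 1, …, g k)` with `g k = a` and `g 1 + ⋯ + g (k-1) ≤ C * a^((k-1)/k)`. -/
theorem msequence_small_tail_exists (k : ℕ) (hk : 1 ≤ k) :
    ∃ C : ℝ, ∀ a : ℕ, 1 ≤ a → ∃ g : ℕ → ℕ, IsMSequence g k ∧ g k = a ∧
      (∑ i ∈ Finset.Ico 1 k, (g i : ℝ)) ≤ C * (a : ℝ) ^ ((k - 1 : ℝ) / k) := by
  refine ⟨((2 * k : ℕ) : ℝ) ^ k, fun a ha => ?_⟩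
  have hex : ∃ b, a ≤ Nat.choose (b + k - 1) k := by
    refine ⟨a + 1, ?_⟩
    have := le_choose_add (a + 1 + k - 1) k hk
    have : a + 1 + k - 1 = a + k := by omega
    have := le_choose_add (a + k) k hk
    omega
  set b := Nat.find hex with hb
  have hspec : a ≤ Nat.choose (b + k - 1) k := Nat.find_spec hex
  have hb1 : 1 ≤ b := by
    rcases Nat.eq_zero_or_pos b with h0 | h0
    · exfalso
      have := hspec
      rw [h0] at this
      have : Nat.choose (0 + k - 1) k = 0 := Nat.choose_eq_zero_of_lt (by omega)
      omega
    · exact h0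
  set m := b + k - 2 with hm
  have hmin : Nat.choose m k < a := by
    have h := Nat.find_min hex (show b - 1 < b by omega)
    have he : b - 1 + k - 1 = m := by omega
    rw [he] at h
    omega
  -- the sequence
  set g : ℕ → ℕ := fun i => if i = k then a else if i = 0 then 1 else Nat.choose (b + i - 1) i
    with hg
  have hgval : ∀ i, 1 ≤ i → i < k → g i = Nat.choose (b + i - 1) i := by
    intro i h1 h2
    simp only [hg]
    rw [if_neg (by omega), if_neg (by omega)]
  refine ⟨g, ⟨by simp [hg]; omega, ?_⟩, by simp [hg], ?_⟩
  · -- M-sequence condition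
    intro i h1 h2
    rw [hgval i h1 h2, pseudoPow_choose h1 (by omega)]
    have heq : b + i - 1 + 1 = b + i := by omega
    rw [heq]
    rcases eq_or_lt_of_le (Nat.succ_le_of_lt h2) with hik | hik
    · -- i + 1 = k
      have hgk : g (i + 1) = a := by simp only [hg]; rw [if_pos (by omega)]
      rw [hgk, show b + i = b + k - 1 by omega, show i + 1 = k by omega]
      exact hspec
    · rw [hgval (i + 1) (by omega) hik]
      have : b + (i + 1) - 1 = b + i := by omega
      rw [this]
  · -- the sum bound
    have hk0 : (k : ℝ) ≠ 0 := by positivity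
    set t : ℝ := (a : ℝ) ^ ((1 : ℝ) / k) with ht
    have ht0 : 0 ≤ t := Real.rpow_nonneg (by positivity) _
    have ht1 : 1 ≤ t := by
      calc (1 : ℝ) = (1 : ℝ) ^ ((1 : ℝ) / k) := (Real.one_rpow _).symm
        _ ≤ t := Real.rpow_le_rpow (by norm_num) (by exact_mod_cast ha) (by positivity)
    have htk : t ^ k = (a : ℝ) := by
      rw [ht, ← Real.rpow_natCast ((a : ℝ) ^ ((1 : ℝ) / k)) k,
        ← Real.rpow_mul (by positivity)]
      rw [one_div, inv_mul_cancel₀ hk0, Real.rpow_one]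
    -- bound m by 2 k t
    have hmle : (m : ℝ) ≤ 2 * k * t := by
      have hpow : ((m + 1 - k : ℕ) ^ k : ℝ) ≤ ((k : ℝ)) ^ k * a := by
        have h1 : ((m + 1 - k : ℕ) ^ k : ℝ) / (Nat.factorial k) ≤ Nat.choose m k :=
          Nat.pow_le_choose k m
        have h2 : (Nat.choose m k : ℝ) ≤ (a : ℝ) := by exact_mod_cast hmin.le
        have h3 : (0 : ℝ) < (Nat.factorial k : ℝ) := by exact_mod_cast k.factorial_pos
        have h4 : ((m + 1 - k : ℕ) ^ k : ℝ) ≤ (Nat.factorial k : ℝ) * a := by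
          rw [div_le_iff₀ h3] at h1
          calc ((m + 1 - k : ℕ) ^ k : ℝ) ≤ (Nat.choose m k : ℝ) * Nat.factorial k := h1
            _ ≤ (a : ℝ) * Nat.factorial k := by
                exact mul_le_mul_of_nonneg_right h2 h3.le
            _ = (Nat.factorial k : ℝ) * a := by ring
        calc ((m + 1 - k : ℕ) ^ k : ℝ) ≤ (Nat.factorial k : ℝ) * a := h4
          _ ≤ ((k : ℝ)) ^ k * a := by
              have : (Nat.factorial k : ℝ) ≤ (k : ℝ) ^ k := by
                exact_mod_cast k.factorial_le_pow
              exact mul_le_mul_of_nonneg_right this (by positivity)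
      have hq : ((m + 1 - k : ℕ) : ℝ) ≤ k * t := by
        refine le_of_pow_le_pow_left₀ (n := k) (by omega) (by positivity) ?_
        calc ((m + 1 - k : ℕ) : ℝ) ^ k = ((m + 1 - k : ℕ) ^ k : ℝ) := by push_cast; ring
          _ ≤ ((k : ℝ)) ^ k * a := hpow
          _ = (k * t) ^ k := by rw [mul_pow, htk]
      have hmq : (m : ℝ) ≤ ((m + 1 - k : ℕ) : ℝ) + k := by
        have : m ≤ (m + 1 - k) + k := by omega
        exact_mod_cast this
      have hkt : (k : ℝ) ≤ k * t := by
        have hk1 : (1 : ℝ) ≤ (k : ℝ) := by exact_mod_cast hk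
        nlinarith [ht1]
      nlinarith
    -- each term is at most m ^ (k-1)
    have hterm : ∀ i ∈ Finset.Ico 1 k, (g i : ℝ) ≤ (m : ℝ) ^ (k - 1) := by
      intro i hi
      rw [Finset.mem_Ico] at hi
      have hk2 : 2 ≤ k := by omega
      have hm1 : 1 ≤ m := by omega
      rw [hgval i hi.1 hi.2]
      have h1 : Nat.choose (b + i - 1) i ≤ (b + i - 1) ^ i := Nat.choose_le_pow _ _
      have h2 : (b + i - 1) ^ i ≤ m ^ i := Nat.pow_le_pow_left (by omega) i
      have h3 : m ^ i ≤ m ^ (k - 1) := Nat.pow_le_pow_right hm1 (by omega)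
      exact_mod_cast le_trans h1 (le_trans h2 h3)
    have hsum : (∑ i ∈ Finset.Ico 1 k, (g i : ℝ)) ≤ (k - 1 : ℕ) * (m : ℝ) ^ (k - 1) := by
      calc (∑ i ∈ Finset.Ico 1 k, (g i : ℝ))
          ≤ ∑ _i ∈ Finset.Ico 1 k, (m : ℝ) ^ (k - 1) := Finset.sum_le_sum hterm
        _ = (k - 1 : ℕ) * (m : ℝ) ^ (k - 1) := by
            rw [Finset.sum_const, Nat.card_Ico, nsmul_eq_mul]
    have hrp : t ^ (k - 1) = (a : ℝ) ^ ((k - 1 : ℝ) / k) := by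
      rw [ht, ← Real.rpow_natCast ((a : ℝ) ^ ((1 : ℝ) / k)) (k - 1),
        ← Real.rpow_mul (by positivity)]
      congr 1
      have : ((k - 1 : ℕ) : ℝ) = (k : ℝ) - 1 := by
        push_cast [Nat.cast_sub hk]; ring
      rw [this]; field_simp
    have hfin : ((k - 1 : ℕ) : ℝ) * (m : ℝ) ^ (k - 1) ≤
        ((2 * k : ℕ) : ℝ) ^ k * (a : ℝ) ^ ((k - 1 : ℝ) / k) := by
      rw [← hrp]
      have h1 : (m : ℝ) ^ (k - 1) ≤ (2 * k * t) ^ (k - 1) :=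
        pow_le_pow_left₀ (by positivity) hmle _
      have h2 : ((k - 1 : ℕ) : ℝ) * (2 * k * t) ^ (k - 1) ≤ (2 * k : ℝ) ^ k * t ^ (k - 1) := by
        rw [mul_pow (2 * (k : ℝ)) t (k - 1)]
        have h3 : ((k - 1 : ℕ) : ℝ) * (2 * (k : ℝ)) ^ (k - 1) ≤ (2 * (k : ℝ)) ^ k := by
          have e : (2 * (k : ℝ)) ^ k = (2 * (k : ℝ)) ^ (k - 1) * (2 * (k : ℝ)) := by
            rw [← pow_succ]
            congr 1
            omega
          rw [e]
          have hle : ((k - 1 : ℕ) : ℝ) ≤ 2 * (k : ℝ) := by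
            have h4 : ((k - 1 : ℕ) : ℝ) ≤ (k : ℝ) := by exact_mod_cast Nat.sub_le k 1
            have hk1 : (1 : ℝ) ≤ (k : ℝ) := by exact_mod_cast hk
            nlinarith
          calc ((k - 1 : ℕ) : ℝ) * (2 * (k : ℝ)) ^ (k - 1)
              ≤ (2 * (k : ℝ)) * (2 * (k : ℝ)) ^ (k - 1) :=
                mul_le_mul_of_nonneg_right hle (pow_nonneg (by positivity) _)
            _ = (2 * (k : ℝ)) ^ (k - 1) * (2 * (k : ℝ)) := mul_comm _ _
        have htpow : (0 : ℝ) ≤ t ^ (k - 1) := by positivity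
        nlinarith [pow_nonneg (by positivity : (0:ℝ) ≤ 2 * (k:ℝ)) (k - 1)]
      have hcast : ((2 * k : ℕ) : ℝ) = 2 * (k : ℝ) := by push_cast; ring
      rw [hcast]
      calc ((k - 1 : ℕ) : ℝ) * (m : ℝ) ^ (k - 1)
          ≤ ((k - 1 : ℕ) : ℝ) * (2 * k * t) ^ (k - 1) := by
            exact mul_le_mul_of_nonneg_left h1 (by positivity)
        _ ≤ (2 * (k : ℝ)) ^ k * t ^ (k - 1) := h2
    exact le_trans hsum hfin
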